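/- Let G be a nonabelian group of order pq where p and q are distinct primes. Then the Chermak–Delgado lattice of G consists of exactly one subgroup, namely the unique normal Sylow subgroup of G, and G has dense CD-subgroups. -/

import Mathlib

open Pointwise

/-- Chermak–Delgado measure of a subgroup. -/
noncomputable def mCD (G : Type*) [Group G] (H : Subgroup G) : ℕ :=
  Nat.card H * Nat.card (Subgroup.centralizer (H : Set G))

/-- Maximal Chermak–Delgado measure. -/
noncomputable def mStar (G : Type*) [Group G] : ℕ :=
  sSup (Set.range (mCD G))

/-- Chermak–Delgado lattice (as a set of subgroups). -/
def CD (G : Type*) [Group G] : Set (Subgroup G) :=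
  {H | mCD G H = mStar G}

/-- A group has dense CD-subgroups if for all subgroups H < K with H not
maximal in K, there exists X in CD(G) with H < X < K. -/
def DenseCD (G : Type*) [Group G] : Prop :=
  ∀ H K : Subgroup G, H < K → (∃ L : Subgroup G, H < L ∧ L < K) →
    ∃ X ∈ CD G, H < X ∧ X < K

section CDAux
open Subgroup

lemma div4 {p q d : ℕ} (hp : p.Prime) (hq : q.Prime) (hpq : p ≠ q) (h : d ∣ p * q) :
    d = 1 ∨ d = p ∨ d = q ∨ d = p * q := by
  have hc : Nat.Coprime p q := (Nat.coprime_primes hp hq).mpr hpq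
  by_cases h1 : p ∣ d <;> by_cases h2 : q ∣ d
  · exact Or.inr <| Or.inr <| Or.inr <| Nat.dvd_antisymm h (hc.mul_dvd_of_dvd_of_dvd h1 h2)
  · obtain ⟨e, rfl⟩ := h1
    have he : e ∣ q := (Nat.mul_dvd_mul_iff_left hp.pos).mp h
    rcases hq.eq_one_or_self_of_dvd e he with rfl | rfl
    · right; left; simp
    · exact absurd (dvd_mul_left _ _) h2
  · obtain ⟨e, rfl⟩ := h2
    have he : e ∣ p := (Nat.mul_dvd_mul_iff_left hq.pos).mp (by rwa [mul_comm p q] at h)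
    rcases hp.eq_one_or_self_of_dvd e he with rfl | rfl
    · right; right; left; simp
    · exact absurd (dvd_mul_left _ _) h1
  · have hdq : d ∣ q := (Nat.Coprime.dvd_of_dvd_mul_left ((hp.coprime_iff_not_dvd).mpr h1).symm h)
    rcases hq.eq_one_or_self_of_dvd d hdq with rfl | rfl
    · exact Or.inl rfl
    · exact absurd dvd_rfl h2

lemma center_eq_bot {G : Type*} [Group G] [Finite G] {p q : ℕ} (hp : p.Prime) (hq : q.Prime)
    (hpq : p ≠ q) (hcard : Nat.card G = p * q) (hna : ¬ ∀ a b : G, a * b = b * a) :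
    Subgroup.center G = ⊥ := by
  have hd : Nat.card (Subgroup.center G) ∣ p * q := hcard ▸ Subgroup.card_subgroup_dvd_card _
  have habelian : ∀ r : ℕ, r.Prime → (Subgroup.center G).index = r → False := by
    intro r hr hidx
    have hc : Nat.card (G ⧸ Subgroup.center G) = r := by
      rw [← Subgroup.index_eq_card, hidx]
    haveI : Fact r.Prime := ⟨hr⟩
    haveI : IsCyclic (G ⧸ Subgroup.center G) := isCyclic_of_prime_card hc
    exact hna fun a b => commutative_of_cyclic_center_quotient (QuotientGroup.mk' _)
      (by rw [QuotientGroup.ker_mk']) a b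
  have hmi := Subgroup.card_mul_index (Subgroup.center G)
  rw [hcard] at hmi
  rcases div4 hp hq hpq hd with h1 | h1 | h1 | h1
  · rw [Subgroup.card_eq_one] at h1
    exact h1
  · rw [h1] at hmi
    exact absurd (habelian q hq (Nat.eq_of_mul_eq_mul_left hp.pos hmi)) not_false
  · rw [h1, mul_comm p q] at hmi
    exact absurd (habelian p hp (Nat.eq_of_mul_eq_mul_left hq.pos hmi)) not_false
  · have htop : Subgroup.center G = ⊤ := Subgroup.eq_top_of_card_eq _ (by rw [h1, hcard])
    refine absurd (hna fun a b => ?_) not_false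
    have ha : a ∈ Subgroup.center G := htop.symm ▸ Subgroup.mem_top a
    exact (Subgroup.mem_center_iff.mp ha b).symm

lemma prime_card_isComm {G : Type*} [Group G] {r : ℕ} (hr : r.Prime) (H : Subgroup G)
    (hH : Nat.card H = r) : IsMulCommutative H := by
  haveI : Fact r.Prime := ⟨hr⟩
  haveI : IsCyclic H := isCyclic_of_prime_card hH
  letI := IsCyclic.commGroup (α := H)
  exact ⟨⟨fun a b => mul_comm a b⟩⟩

lemma cent_card {G : Type*} [Group G] [Finite G] {p q : ℕ} (hp : p.Prime) (hq : q.Prime)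
    (hpq : p ≠ q) (hcard : Nat.card G = p * q) (hZ : Subgroup.center G = ⊥)
    (H : Subgroup G) {r : ℕ} (hr : r.Prime)    (hHr : Nat.card H = r) :
    Nat.card (Subgroup.centralizer (H : Set G)) = r := by
  haveI := prime_card_isComm hr H hHr
  have hle : H ≤ Subgroup.centralizer (H : Set G) := Subgroup.le_centralizer H
  have hdvd1 : r ∣ Nat.card (Subgroup.centralizer (H : Set G)) :=
    hHr ▸ Subgroup.card_dvd_of_le hle
  have hdvd2 : Nat.card (Subgroup.centralizer (H : Set G)) ∣ p * q :=
    hcard ▸ Subgroup.card_subgroup_dvd_card _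
  have hne : Subgroup.centralizer (H : Set G) ≠ ⊤ := by
    intro htop
    have : (H : Set G) ⊆ Subgroup.center G := Subgroup.centralizer_eq_top_iff_subset.mp htop
    rw [hZ] at this
    have : H ≤ ⊥ := this
    rw [le_bot_iff] at this
    rw [this, Subgroup.card_bot] at hHr
    exact hr.one_lt.ne hHr
  rcases div4 hp hq hpq hdvd2 with h1 | h1 | h1 | h1
  · rw [h1] at hdvd1
    exact absurd (Nat.dvd_one.mp hdvd1) hr.one_lt.ne'
  · rw [h1] at hdvd1 ⊢
    exact ((Nat.prime_dvd_prime_iff_eq hr hp).mp hdvd1).symm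
  · rw [h1] at hdvd1 ⊢
    exact ((Nat.prime_dvd_prime_iff_eq hr hq).mp hdvd1).symm
  · exact absurd (Subgroup.eq_top_of_card_eq _ (by rw [h1, hcard])) hne

lemma sylow_stuff {G : Type*} [Group G] [Finite G] {p q : ℕ} (hp : p.Prime) (hq : q.Prime)
    (hlt : p < q) (hcard : Nat.card G = p * q) :
    ∃ N : Subgroup G, N.Normal ∧ Nat.card N = q ∧
      ∀ H : Subgroup G, Nat.card H = q → H = N := by
  haveI : Fact q.Prime := ⟨hq⟩
  have hpq : p ≠ q := hlt.ne
  set Q : Sylow q G := default with hQdef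
  have hfact : (Nat.card G).factorization q = 1 := by
    rw [hcard, Nat.factorization_mul hp.pos.ne' hq.pos.ne', Finsupp.add_apply,
      hp.factorization, hq.factorization, Finsupp.single_apply, Finsupp.single_apply]
    simp [hpq]
  have hQcard : Nat.card Q = q := by
    rw [Sylow.card_eq_multiplicity, hfact, pow_one]
  have hidx : (Q : Subgroup G).index = p := by
    have := Subgroup.card_mul_index (Q : Subgroup G)
    rw [hcard] at this
    have h2 : Nat.card (Q : Subgroup G) = q := hQcard
    rw [h2, mul_comm p q] at this
    exact Nat.eq_of_mul_eq_mul_left hq.pos this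
  have hnum : Nat.card (Sylow q G) = 1 := by
    have h1 : Nat.card (Sylow q G) ∣ p := hidx ▸ Sylow.card_dvd_index Q
    have h2 : Nat.card (Sylow q G) ≡ 1 [MOD q] := card_sylow_modEq_one q G
    rcases hp.eq_one_or_self_of_dvd _ h1 with h | h
    · exact h
    · exfalso
      rw [h] at h2
      exact hp.one_lt.ne' (Nat.ModEq.eq_of_lt_of_lt h2 hlt hq.one_lt)
  haveI hss : Subsingleton (Sylow q G) :=
    (Nat.card_eq_one_iff_unique.mp hnum).1
  have hnorm : (Q : Subgroup G).Normal := by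
    rw [← Subgroup.normalizer_eq_top_iff, eq_top_iff']
    intro g
    exact Sylow.smul_eq_iff_mem_normalizer.mp (Subsingleton.elim _ _)
  refine ⟨Q, hnorm, hQcard, fun H hH => ?_⟩
  obtain ⟨Q', hQ'⟩ := (IsPGroup.of_card (n := 1) (by rw [hH, pow_one])).exists_le_sylow
  have : Q' = Q := Subsingleton.elim _ _
  rw [this] at hQ'
  exact Subgroup.eq_of_le_of_card_ge hQ' (by rw [hH, hQcard])



lemma centralizer_bot (G : Type*) [Group G] :
    Subgroup.centralizer ((⊥ : Subgroup G) : Set G) = ⊤ := by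
  rw [eq_top_iff']
  intro g
  rw [Subgroup.mem_centralizer_iff]
  intro h hh
  rw [Subgroup.coe_bot, Set.mem_singleton_iff] at hh
  subst hh; simp

lemma key {G : Type*} [Group G] [Finite G] {p q : ℕ} (hp : p.Prime) (hq : q.Prime)
    (hlt : p < q) (hcard : Nat.card G = p * q) (hna : ¬ ∀ a b : G, a * b = b * a) :
    ∃ N : Subgroup G, N.Normal ∧ Nat.card N = q ∧ CD G = {N} ∧
      (∀ M : Subgroup G, M.Normal → (Nat.card M = p ∨ Nat.card M = q) → M = N) ∧
      ⊥ < N ∧ N < ⊤ := by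
  have hpq : p ≠ q := hlt.ne
  have hZ : Subgroup.center G = ⊥ := center_eq_bot hp hq hpq hcard hna
  obtain ⟨N, hNnorm, hNcard, hNuniq⟩ := sylow_stuff hp hq hlt hcard
  -- value of mCD on every subgroup
  have hvals : ∀ H : Subgroup G,
      mCD G H = p * q ∨ mCD G H = p * p ∨ mCD G H = q * q := by
    intro H
    have hdvd : Nat.card H ∣ p * q := hcard ▸ Subgroup.card_subgroup_dvd_card _
    rcases div4 hp hq hpq hdvd with h1 | h1 | h1 | h1
    · left
      rw [Subgroup.card_eq_one] at h1
      rw [mCD, h1, centralizer_bot, Subgroup.card_bot, Subgroup.card_top, hcard, one_mul]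
    · right; left
      rw [mCD, h1, cent_card hp hq hpq hcard hZ H hp h1]
    · right; right
      rw [mCD, h1, cent_card hp hq hpq hcard hZ H hq h1]
    · left
      have htop : H = ⊤ := Subgroup.eq_top_of_card_eq _ (by rw [h1, hcard])
      rw [mCD, htop, Subgroup.card_top, hcard, Subgroup.coe_top, Subgroup.centralizer_univ,
        hZ, Subgroup.card_bot, mul_one]
  have hNval : mCD G N = q * q := by
    rw [mCD, hNcard, cent_card hp hq hpq hcard hZ N hq hNcard]
  have hppq : p * q < q * q := by
    have := hq.pos
    exact Nat.mul_lt_mul_of_lt_of_le hlt le_rfl this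
  have hpplt : p * p < q * q := Nat.mul_lt_mul_of_lt_of_le hlt hlt.le hq.pos
  have hbdd : ∀ n ∈ Set.range (mCD G), n ≤ q * q := by
    rintro n ⟨H, rfl⟩
    rcases hvals H with h | h | h <;> rw [h] <;> omega
  have hstar : mStar G = q * q := by
    refine le_antisymm (csSup_le ⟨mCD G N, Set.mem_range_self N⟩ hbdd) ?_
    exact le_csSup ⟨q * q, hbdd⟩ (hNval ▸ Set.mem_range_self N)
  have hCD : CD G = {N} := by
    ext H
    simp only [CD, Set.mem_setOf_eq, Set.mem_singleton_iff, hstar]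
    constructor
    · intro hH
      have hdvd : Nat.card H ∣ p * q := hcard ▸ Subgroup.card_subgroup_dvd_card _
      rcases div4 hp hq hpq hdvd with h1 | h1 | h1 | h1
      · exfalso
        rw [Subgroup.card_eq_one] at h1
        rw [mCD, h1, centralizer_bot, Subgroup.card_bot, Subgroup.card_top, hcard, one_mul]
          at hH
        omega
      · exfalso
        rw [mCD, h1, cent_card hp hq hpq hcard hZ H hp h1] at hH
        omega
      · exact hNuniq H h1
      · exfalso
        have htop : H = ⊤ := Subgroup.eq_top_of_card_eq _ (by rw [h1, hcard])
        rw [mCD, htop, Subgroup.card_top, hcard, Subgroup.coe_top, Subgroup.centralizer_univ,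
          hZ, Subgroup.card_bot, mul_one] at hH
        omega
    · rintro rfl
      exact hNval
  have hMuniq : ∀ M : Subgroup G, M.Normal → (Nat.card M = p ∨ Nat.card M = q) → M = N := by
    intro M hMnorm hMcard
    rcases hMcard with hMp | hMq
    · exfalso
      -- M normal of order p leads to contradiction
      have hdisj : Disjoint M N := by
        rw [disjoint_iff]
        rw [← Subgroup.card_eq_one]
        have d1 : Nat.card (M ⊓ N : Subgroup G) ∣ p :=
          hMp ▸ Subgroup.card_dvd_of_le inf_le_left
        have d2 : Nat.card (M ⊓ N : Subgroup G) ∣ q :=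
          hNcard ▸ Subgroup.card_dvd_of_le inf_le_right
        have hc : Nat.gcd p q = 1 := (Nat.coprime_primes hp hq).mpr hpq
        exact Nat.dvd_one.mp (hc ▸ Nat.dvd_gcd d1 d2)
      have hNle : N ≤ Subgroup.centralizer (M : Set G) := by
        intro n hn
        rw [Subgroup.mem_centralizer_iff]
        intro m hm
        exact Subgroup.commute_of_normal_of_disjoint M N hMnorm hNnorm hdisj m n hm hn
      have hcMp : Nat.card (Subgroup.centralizer (M : Set G)) = p :=
        cent_card hp hq hpq hcard hZ M hp hMp
      have : q ∣ p := hcMp ▸ hNcard ▸ Subgroup.card_dvd_of_le hNle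
      have := Nat.le_of_dvd hp.pos this
      omega
    · exact hNuniq M hMq
  refine ⟨N, hNnorm, hNcard, hCD, hMuniq, ?_, ?_⟩
  · rw [bot_lt_iff_ne_bot]
    intro hbot
    rw [hbot, Subgroup.card_bot] at hNcard
    exact hq.one_lt.ne' hNcard.symm
  · rw [lt_top_iff_ne_top]
    intro htop
    rw [htop, Subgroup.card_top, hcard] at hNcard
    nlinarith [hp.one_lt, hq.pos]


lemma dense_aux {G : Type*} [Group G] [Finite G] {p q : ℕ} (hp : p.Prime) (hq : q.Prime)
    (hpq : p ≠ q) (hcard : Nat.card G = p * q) (N : Subgroup G) (hN : N ∈ CD G)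
    (hb : ⊥ < N) (ht : N < ⊤) : DenseCD G := by
  intro H K hHK hex
  obtain ⟨L, hHL, hLK⟩ := hex
  have hdL : Nat.card L ∣ p * q := hcard ▸ Subgroup.card_subgroup_dvd_card L
  have hdK : Nat.card K ∣ p * q := hcard ▸ Subgroup.card_subgroup_dvd_card K
  have hne1 : Nat.card H ≠ Nat.card L :=
    fun h => hHL.ne (Subgroup.eq_of_le_of_card_ge hHL.le h.ge)
  have hne2 : Nat.card L ≠ Nat.card K :=
    fun h => hLK.ne (Subgroup.eq_of_le_of_card_ge hLK.le h.ge)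
  have hab : Nat.card H ∣ Nat.card L := Subgroup.card_dvd_of_le hHL.le
  have hbc : Nat.card L ∣ Nat.card K := Subgroup.card_dvd_of_le hLK.le
  have hprime : ∀ r : ℕ, r.Prime → Nat.card L = r → Nat.card H = 1 ∧ Nat.card K = p * q := by
    intro r hr h
    constructor
    · rcases hr.eq_one_or_self_of_dvd _ (h ▸ hab) with h1 | h1
      · exact h1
      · exact absurd (h1.trans h.symm) hne1
    · have hrK : r ∣ Nat.card K := h ▸ hbc
      rcases div4 hp hq hpq hdK with hk | hk | hk | hk
      · exfalso; rw [hk] at hrK; exact hr.one_lt.ne' (Nat.dvd_one.mp hrK)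
      · exfalso
        rw [hk] at hrK
        have : r = p := (Nat.prime_dvd_prime_iff_eq hr hp).mp hrK
        exact hne2 (by rw [h, hk, this])
      · exfalso
        rw [hk] at hrK
        have : r = q := (Nat.prime_dvd_prime_iff_eq hr hq).mp hrK
        exact hne2 (by rw [h, hk, this])
      · exact hk
  have hH1 : Nat.card H = 1 ∧ Nat.card K = p * q := by
    rcases div4 hp hq hpq hdL with h | h | h | h
    · exfalso
      exact hne1 ((Nat.dvd_one.mp (h ▸ hab)).trans h.symm)
    · exact hprime p hp h
    · exact hprime q hq h
    · exfalso
      exact hne2 (h.trans (Nat.dvd_antisymm hdK (h ▸ hbc)).symm)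
  have hHbot : H = ⊥ := Subgroup.card_eq_one.mp hH1.1
  have hKtop : K = ⊤ := Subgroup.eq_top_of_card_eq _ (by rw [hH1.2, hcard])
  exact ⟨N, hN, by rw [hHbot]; exact hb, by rw [hKtop]; exact ht⟩


end CDAux

theorem stmt12 (G : Type*) [Group G] [Finite G] (p q : ℕ) (hp : p.Prime) (hq : q.Prime)
    (hpq : p ≠ q) (hcard : Nat.card G = p * q) (hna : ¬ ∀ a b : G, a * b = b * a) :
    (∃ N : Subgroup G, N.Normal ∧ (Nat.card N = p ∨ Nat.card N = q) ∧ CD G = {N} ∧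
      ∀ M : Subgroup G, M.Normal → (Nat.card M = p ∨ Nat.card M = q) → M = N) ∧
    DenseCD G := by
  rcases hpq.lt_or_gt with hlt | hlt
  · obtain ⟨N, hn, hcardN, hCD, huniq, hb, ht⟩ := key hp hq hlt hcard hna
    have hN : N ∈ CD G := by rw [hCD]; rfl
    exact ⟨⟨N, hn, Or.inr hcardN, hCD, huniq⟩,
      dense_aux hp hq hpq hcard N hN hb ht⟩
  · obtain ⟨N, hn, hcardN, hCD, huniq, hb, ht⟩ :=
      key hq hp hlt (by rwa [mul_comm]) hna
    have hN : N ∈ CD G := by rw [hCD]; rfl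
    exact ⟨⟨N, hn, Or.inl hcardN, hCD, fun M hM hc => huniq M hM hc.symm⟩,
      dense_aux hp hq hpq hcard N hN hb ht⟩
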